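/- For every natural number m ≥ 1, ∑_{k=1}^{m} 1/(m + k) < ln 2. Consequently, for every positive even n, the pointer-following strategy's winning probability 1 − ∑_{k=1}^{n/2} 1/(n/2 + k) is strictly greater than 1 − ln 2. -/

import Mathlib

lemma aux_term (x : ℝ) (hx : 0 < x) :
    1 / (x + 1) < Real.log (x + 1) - Real.log x := by
  have h1 : (0:ℝ) < x + 1 := by linarith
  have hne : x / (x + 1) ≠ 1 := by
    intro h
    have := (div_eq_one_iff_eq (by linarith : x + 1 ≠ 0)).mp h
    linarith
  have h2 := Real.log_lt_sub_one_of_pos (div_pos hx h1) hne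
  rw [Real.log_div (ne_of_gt hx) (ne_of_gt h1)] at h2
  have h3 : x / (x + 1) - 1 = -(1 / (x + 1)) := by field_simp; ring
  rw [h3] at h2
  linarith

lemma aux_main (m : ℕ) (hm : 1 ≤ m) :
    ∑ k ∈ Finset.Icc 1 m, (1 : ℝ) / ((m + k : ℕ) : ℝ) < Real.log 2 := by
  have hre : ∑ k ∈ Finset.Icc 1 m, (1 : ℝ) / ((m + k : ℕ) : ℝ)
      = ∑ i ∈ Finset.range m, (1 : ℝ) / ((m : ℝ) + i + 1) := by
    rw [show Finset.Icc 1 m = Finset.Ico 1 (m+1) by rfl, Finset.sum_Ico_eq_sum_range]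
    apply Finset.sum_congr rfl
    intro i _
    push_cast
    ring_nf
  have htel := Finset.sum_range_sub (fun i => Real.log ((m : ℝ) + i)) m
  simp only [Nat.cast_add, Nat.cast_one, Nat.cast_zero] at htel
  have hm0 : (0:ℝ) < (m : ℝ) := by exact_mod_cast hm
  have h2m : Real.log ((m:ℝ) + m) - Real.log ((m:ℝ) + 0) = Real.log 2 := by
    rw [show (m : ℝ) + m = 2 * m by ring,
      Real.log_mul (by norm_num) (ne_of_gt hm0), add_zero]
    ring
  rw [h2m] at htel
  rw [hre, ← htel]
  apply Finset.sum_lt_sum_of_nonempty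
  · exact Finset.nonempty_range_iff.mpr (by omega)
  · intro i _
    have := aux_term ((m : ℝ) + i) (by positivity)
    have e1 : (m : ℝ) + i + 1 = (m : ℝ) + (i + 1) := by ring
    rw [e1] at this ⊢
    exact this

theorem harmonic_tail_lt_log_two :
    (∀ m : ℕ, 1 ≤ m →
        ∑ k ∈ Finset.Icc 1 m, (1 : ℝ) / ((m + k : ℕ) : ℝ) < Real.log 2)
    ∧
    (∀ n : ℕ, 0 < n → Even n →
        1 - Real.log 2 <
          1 - ∑ k ∈ Finset.Icc 1 (n / 2), (1 : ℝ) / ((n / 2 + k : ℕ) : ℝ)) := by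
  refine ⟨aux_main, fun n hn he => ?_⟩
  have h2 : 1 ≤ n / 2 := by
    obtain ⟨r, rfl⟩ := he; omega
  linarith [aux_main (n / 2) h2]
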